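/- For every matrix A in SL_2(ℤ) there exist an integer n ≥ 1 and strictly positive integers a_1, …, a_n such that A = M_n(a_1, …, a_n). -/

import Mathlib

/-- The elementary matrix `[[a, -1], [1, 0]]`. -/
def genMat (a : ℤ) : Matrix (Fin 2) (Fin 2) ℤ := !![a, -1; 1, 0]

/-- `Mprod [a₁, …, aₙ] = [[aₙ,-1],[1,0]] ⋯ [[a₁,-1],[1,0]]`. -/
def Mprod (l : List ℤ) : Matrix (Fin 2) (Fin 2) ℤ := ((l.map genMat).reverse).prod

/-- Representable (possibly by the empty word) as a positive product of `genMat`s. -/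
def PosRep (A : Matrix (Fin 2) (Fin 2) ℤ) : Prop :=
  ∃ l : List ℤ, (∀ x ∈ l, 0 < x) ∧ Mprod l = A

lemma Mprod_append (l₁ l₂ : List ℤ) : Mprod (l₁ ++ l₂) = Mprod l₂ * Mprod l₁ := by
  simp [Mprod, List.map_append, List.reverse_append, List.prod_append]

lemma PosRep.mul {A B : Matrix (Fin 2) (Fin 2) ℤ} (hA : PosRep A) (hB : PosRep B) :
    PosRep (A * B) := by
  obtain ⟨la, hla, ha⟩ := hA
  obtain ⟨lb, hlb, hb⟩ := hB
  refine ⟨lb ++ la, ?_, ?_⟩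
  · intro x hx
    rcases List.mem_append.mp hx with h | h
    · exact hlb x h
    · exact hla x h
  · rw [Mprod_append, ha, hb]

lemma posRep_T : PosRep !![1, 1; 0, 1] := by
  refine ⟨[1, 1, 1, 1, 1, 2], by norm_num, ?_⟩
  simp [Mprod, genMat]

lemma posRep_Tinv : PosRep !![1, -1; 0, 1] := by
  refine ⟨[1, 1, 1, 1, 2, 1, 1], by norm_num, ?_⟩
  simp [Mprod, genMat]

lemma posRep_Sinv : PosRep !![0, 1; -1, 0] := by
  refine ⟨[1, 1, 2, 1, 1], by norm_num, ?_⟩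
  simp [Mprod, genMat]

lemma posRep_negI : PosRep !![-1, 0; 0, -1] := by
  refine ⟨[1, 1, 1], by norm_num, ?_⟩
  simp [Mprod, genMat]

lemma posRep_one : PosRep (1 : Matrix (Fin 2) (Fin 2) ℤ) := by
  refine ⟨[1, 1, 1, 1, 1, 1], by norm_num, ?_⟩
  simp [Mprod, genMat, Matrix.one_fin_two]

lemma posRep_Tpow (k : ℤ) : PosRep !![1, k; 0, 1] := by
  induction k using Int.induction_on with
  | zero =>
    have := posRep_one
    rwa [show (1 : Matrix (Fin 2) (Fin 2) ℤ) = !![1, (0:ℤ); 0, 1] from by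
      rw [Matrix.one_fin_two]] at this
  | succ i ih =>
    have h := ih.mul posRep_T
    rwa [show !![1, (i:ℤ); 0, 1] * !![1, 1; 0, 1] = !![1, (i:ℤ)+1; 0, 1] from by
      norm_num [Matrix.mul_fin_two]; ring_nf] at h
  | pred i ih =>
    have h := ih.mul posRep_Tinv
    rwa [show !![1, -(i:ℤ); 0, 1] * !![1, -1; 0, 1] = !![1, -(i:ℤ)-1; 0, 1] from by
      norm_num [Matrix.mul_fin_two]; ring] at h

lemma posRep_key : ∀ n : ℕ, ∀ a b c d : ℤ, c.natAbs = n → a * d - b * c = 1 →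
    PosRep !![a, b; c, d] := by
  intro n
  induction n using Nat.strong_induction_on with
  | _ n ih =>
    intro a b c d hn hdet
    by_cases hc : c = 0
    · subst hc
      have had : a * d = 1 := by linarith
      rcases Int.mul_eq_one_iff_eq_one_or_neg_one.mp had with ⟨ha, hd⟩ | ⟨ha, hd⟩
      · subst ha; subst hd
        exact posRep_Tpow b
      · subst ha; subst hd
        have h := posRep_negI.mul (posRep_Tpow (-b))
        rwa [show !![-1, 0; 0, -1] * !![1, -b; 0, 1] = !![(-1:ℤ), b; 0, -1] from by
          norm_num [Matrix.mul_fin_two]] at h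
    · set k : ℤ := -(a / c) with hk
      set r : ℤ := a % c with hr
      have hrk : r = a + c * k := by
        rw [hr, hk, Int.emod_def]; ring
      have hrlt : r.natAbs < n := by
        rw [← hn]
        have h0 : 0 ≤ r := Int.emod_nonneg a hc
        have h1 : r < |c| := by rw [Int.abs_eq_natAbs]; exact Int.emod_lt a hc
        rw [Int.abs_eq_natAbs] at h1
        omega
      have hdetB : (-c) * (b + d * k) - (-d) * r = 1 := by
        rw [hrk]; ring_nf; linarith
      have hB := ih r.natAbs hrlt (-c) (-d) r (b + d * k) rfl hdetB
      rw [hrk] at hB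
      have h := (posRep_Tpow (-k)).mul (posRep_Sinv.mul hB)
      rwa [show !![1, -k; 0, 1] * (!![0, 1; -1, 0] * !![-c, -d; a + c * k, b + d * k])
          = !![a, b; c, d] from by
        norm_num [Matrix.mul_fin_two]; ring_nf; simp] at h

/-- Every matrix in `SL₂(ℤ)` can be written as `Mₙ(a₁,…,aₙ)` with all `aᵢ > 0`. -/
theorem stmt0 (A : Matrix.SpecialLinearGroup (Fin 2) ℤ) :
    ∃ l : List ℤ, l ≠ [] ∧ (∀ x ∈ l, 0 < x) ∧ Mprod l = (A : Matrix (Fin 2) (Fin 2) ℤ) := by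
  have hdet : (A : Matrix (Fin 2) (Fin 2) ℤ).det = 1 := A.property
  rw [Matrix.det_fin_two] at hdet
  have hP : PosRep ((A : Matrix (Fin 2) (Fin 2) ℤ)) := by
    have h := posRep_key ((A : Matrix (Fin 2) (Fin 2) ℤ) 1 0).natAbs
      ((A : Matrix (Fin 2) (Fin 2) ℤ) 0 0) ((A : Matrix (Fin 2) (Fin 2) ℤ) 0 1)
      ((A : Matrix (Fin 2) (Fin 2) ℤ) 1 0) ((A : Matrix (Fin 2) (Fin 2) ℤ) 1 1)
      rfl (by linarith)
    rwa [← Matrix.eta_fin_two (A : Matrix (Fin 2) (Fin 2) ℤ)] at h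
  obtain ⟨l, hl, hml⟩ := hP
  obtain ⟨l1, hl1, hml1⟩ := posRep_one
  refine ⟨l ++ [1, 1, 1, 1, 1, 1], by simp, ?_, ?_⟩
  · intro x hx
    rcases List.mem_append.mp hx with h | h
    · exact hl x h
    · simp at h; omega
  · rw [Mprod_append]
    have : Mprod [1, 1, 1, 1, 1, 1] = (1 : Matrix (Fin 2) (Fin 2) ℤ) := by
      simp [Mprod, genMat, Matrix.one_fin_two]
    rw [this, one_mul, hml]
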